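/- Fix k₀ ∈ ℕ, k ≤ k₀, and A ⊆ ℕ. Let I be the type of all k-graphs on vertex sets Fin n (i.e. Σ n : ℕ, SimpleGraph (Fin n) × (Fin k → Option (Fin n))) that either have no vertices or have at least one vertex outside the range of the labeling. Then there exist two functions g₁, g₂ : I → ℝ such that for every X ∈ I the row of X in the connection matrix H(f_A, ⊔ₖ), namely the function I → ℝ sending Y to f_A applied to the underlying graph of X ⊔ₖ Y, lies in the ℝ-linear span of {g₁, g₂}; that is, this restricted connection matrix of f_A has rank at most 2. -/

import Mathlib

/-- Same-side adjacency on the disjoint union of two graphs. -/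
def sumAdj {V₁ V₂ : Type*} (G₁ : SimpleGraph V₁) (G₂ : SimpleGraph V₂) :
    V₁ ⊕ V₂ → V₁ ⊕ V₂ → Prop
  | Sum.inl a, Sum.inl b => G₁.Adj a b
  | Sum.inr a, Sum.inr b => G₂.Adj a b
  | _, _ => False

lemma sumAdj_symm {V₁ V₂ : Type*} (G₁ : SimpleGraph V₁) (G₂ : SimpleGraph V₂)
    {u v : V₁ ⊕ V₂} (h : sumAdj G₁ G₂ u v) : sumAdj G₁ G₂ v u := by
  cases u <;> cases v <;> simp_all [sumAdj] <;> exact h.symm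

/-- The generating relation for gluing two `k`-graphs: identify vertices
carrying the same label. -/
def glueRel {k : ℕ} {V₁ V₂ : Type*} (ℓ₁ : Fin k → Option V₁) (ℓ₂ : Fin k → Option V₂)
    (u v : V₁ ⊕ V₂) : Prop :=
  ∃ (i : Fin k) (v₁ : V₁) (v₂ : V₂),
    ℓ₁ i = some v₁ ∧ ℓ₂ i = some v₂ ∧ u = Sum.inl v₁ ∧ v = Sum.inr v₂

def glueSetoid {k : ℕ} {V₁ V₂ : Type*} (ℓ₁ : Fin k → Option V₁)
    (ℓ₂ : Fin k → Option V₂) : Setoid (V₁ ⊕ V₂) :=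
  Relation.EqvGen.setoid (glueRel ℓ₁ ℓ₂)

/-- The vertex type of the gluing of two `k`-graphs. -/
def GlueVert {k : ℕ} {V₁ V₂ : Type*} (ℓ₁ : Fin k → Option V₁)
    (ℓ₂ : Fin k → Option V₂) : Type _ :=
  Quotient (glueSetoid ℓ₁ ℓ₂)

def glueMk {k : ℕ} {V₁ V₂ : Type*} (ℓ₁ : Fin k → Option V₁)
    (ℓ₂ : Fin k → Option V₂) (u : V₁ ⊕ V₂) : GlueVert ℓ₁ ℓ₂ :=
  Quotient.mk (glueSetoid ℓ₁ ℓ₂) u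

/-- The underlying graph of the gluing of two `k`-graphs. -/
def glueGraph {k : ℕ} {V₁ V₂ : Type*} (G₁ : SimpleGraph V₁) (ℓ₁ : Fin k → Option V₁)
    (G₂ : SimpleGraph V₂) (ℓ₂ : Fin k → Option V₂) :
    SimpleGraph (GlueVert ℓ₁ ℓ₂) where
  Adj x y := x ≠ y ∧ ∃ u v : V₁ ⊕ V₂,
    glueMk ℓ₁ ℓ₂ u = x ∧ glueMk ℓ₁ ℓ₂ v = y ∧ sumAdj G₁ G₂ u v
  symm := ⟨fun x y ⟨hne, u, v, hu, hv, h⟩ => ⟨hne.symm, v, u, hv, hu, sumAdj_symm G₁ G₂ h⟩⟩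
  loopless := ⟨fun x h => h.1 rfl⟩

/-- The labeling of the gluing of two `k`-graphs. -/
def glueLabel {k : ℕ} {V₁ V₂ : Type*} (ℓ₁ : Fin k → Option V₁)
    (ℓ₂ : Fin k → Option V₂) (i : Fin k) : Option (GlueVert ℓ₁ ℓ₂) :=
  match ℓ₁ i with
  | some v => some (glueMk ℓ₁ ℓ₂ (Sum.inl v))
  | none => (ℓ₂ i).map fun v => glueMk ℓ₁ ℓ₂ (Sum.inr v)

noncomputable instance {k : ℕ} {V₁ V₂ : Type*} [Fintype V₁] [Fintype V₂]
    (ℓ₁ : Fin k → Option V₁) (ℓ₂ : Fin k → Option V₂) : Fintype (GlueVert ℓ₁ ℓ₂) := by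
  classical exact Quotient.fintype (glueSetoid ℓ₁ ℓ₂)

/-- A graph is `m`-connected if it has more than `m` vertices and removing any
fewer than `m` vertices leaves it connected. -/
def IsMConnected {V : Type*} [Fintype V] (m : ℕ) (G : SimpleGraph V) : Prop :=
  m < Fintype.card V ∧ ∀ S : Set V, S.ncard < m → (G.induce Sᶜ).Connected

open Classical in
/-- The graph parameter `f_A`: the number of vertices if the graph is
`(k₀+1)`-connected with number of vertices in `A`, and `0` otherwise. -/
noncomputable def fA (k₀ : ℕ) (A : Set ℕ) {V : Type*} [Fintype V] (G : SimpleGraph V) : ℝ :=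
  if IsMConnected (k₀ + 1) G ∧ Fintype.card V ∈ A then (Fintype.card V : ℝ) else 0

/-- `k`-graphs on vertex sets `Fin n` that have no vertices or at least one
vertex outside the range of the labeling. -/
def Idx (k : ℕ) :=
  {X : Σ n : ℕ, SimpleGraph (Fin n) × (Fin k → Option (Fin n)) //
    X.1 = 0 ∨ ∃ v : Fin X.1, ∀ i : Fin k, X.2.2 i ≠ some v}

/- ======================= auxiliary lemmas ======================= -/

lemma eqvGen_eq_of_not {α : Type*} {r : α → α → Prop} (h : ∀ x y, ¬ r x y)
    {x y : α} (hxy : Relation.EqvGen r x y) : x = y := by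
  induction hxy with
  | rel a b hab => exact absurd hab (h a b)
  | refl a => rfl
  | symm a b _ ih => exact ih.symm
  | trans a b c _ _ ih1 ih2 => exact ih1.trans ih2

lemma glue_eqvGen_fix {k : ℕ} {V₁ V₂ : Type*} {ℓ₁ : Fin k → Option V₁}
    {ℓ₂ : Fin k → Option V₂} {x y : V₁ ⊕ V₂}
    (h : Relation.EqvGen (glueRel ℓ₁ ℓ₂) x y) (z : V₁ ⊕ V₂)
    (hz1 : ∀ t, ¬ glueRel ℓ₁ ℓ₂ z t) (hz2 : ∀ t, ¬ glueRel ℓ₁ ℓ₂ t z) :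
    (x = z → y = z) ∧ (y = z → x = z) := by
  induction h with
  | rel a b hab =>
    constructor
    · rintro rfl; exact absurd hab (hz1 b)
    · rintro rfl; exact absurd hab (hz2 a)
  | refl a => exact ⟨id, id⟩
  | symm a b _ ih => exact ⟨ih.2, ih.1⟩
  | trans a b c _ _ ih1 ih2 => exact ⟨fun h => ih2.1 (ih1.1 h), fun h => ih1.2 (ih2.2 h)⟩

lemma glue_eqvGen_sides {k : ℕ} {V₁ V₂ : Type*} {ℓ₁ : Fin k → Option V₁}
    {ℓ₂ : Fin k → Option V₂} {x y : V₁ ⊕ V₂}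
    (h : Relation.EqvGen (glueRel ℓ₁ ℓ₂) x y) :
    ((∃ a, x = Sum.inl a) ∧ (∃ b, y = Sum.inl b)) ∨
    ((∃ a, x = Sum.inr a) ∧ (∃ b, y = Sum.inr b)) ∨
    (∃ i v₁ v₂, ℓ₁ i = some v₁ ∧ ℓ₂ i = some v₂ ∧
      Relation.EqvGen (glueRel ℓ₁ ℓ₂) x (Sum.inl v₁)) := by
  induction h with
  | rel a b hab =>
    obtain ⟨i, v₁, v₂, h1, h2, rfl, rfl⟩ := hab
    exact Or.inr (Or.inr ⟨i, v₁, v₂, h1, h2, Relation.EqvGen.refl _⟩)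
  | refl a =>
    cases a with
    | inl a => exact Or.inl ⟨⟨a, rfl⟩, ⟨a, rfl⟩⟩
    | inr a => exact Or.inr (Or.inl ⟨⟨a, rfl⟩, ⟨a, rfl⟩⟩)
  | symm a b hab ih =>
    rcases ih with ⟨h1, h2⟩ | ⟨h1, h2⟩ | ⟨i, v₁, v₂, h1, h2, h3⟩
    · exact Or.inl ⟨h2, h1⟩
    · exact Or.inr (Or.inl ⟨h2, h1⟩)
    · exact Or.inr (Or.inr ⟨i, v₁, v₂, h1, h2, (Relation.EqvGen.symm _ _ hab).trans _ _ _ h3⟩)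
  | trans a b c hab hbc ih1 ih2 =>
    rcases ih1 with ⟨h1, h2⟩ | ⟨h1, h2⟩ | ⟨i, v₁, v₂, hh1, hh2, hh3⟩
    · rcases ih2 with ⟨h3, h4⟩ | ⟨h3, h4⟩ | ⟨i, v₁, v₂, hh1, hh2, hh3⟩
      · exact Or.inl ⟨h1, h4⟩
      · obtain ⟨b1, rfl⟩ := h2; obtain ⟨b2, hb2⟩ := h3; simp at hb2
      · exact Or.inr (Or.inr ⟨i, v₁, v₂, hh1, hh2, hab.trans _ _ _ hh3⟩)
    · rcases ih2 with ⟨h3, h4⟩ | ⟨h3, h4⟩ | ⟨i, v₁, v₂, hh1, hh2, hh3⟩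
      · obtain ⟨b1, rfl⟩ := h2; obtain ⟨b2, hb2⟩ := h3; simp at hb2
      · exact Or.inr (Or.inl ⟨h1, h4⟩)
      · exact Or.inr (Or.inr ⟨i, v₁, v₂, hh1, hh2, hab.trans _ _ _ hh3⟩)
    · exact Or.inr (Or.inr ⟨i, v₁, v₂, hh1, hh2, hh3⟩)

lemma glueMk_exact {k : ℕ} {V₁ V₂ : Type*} {ℓ₁ : Fin k → Option V₁}
    {ℓ₂ : Fin k → Option V₂} {x y : V₁ ⊕ V₂} (h : glueMk ℓ₁ ℓ₂ x = glueMk ℓ₁ ℓ₂ y) :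
    Relation.EqvGen (glueRel ℓ₁ ℓ₂) x y :=
  Quotient.exact h

lemma glueMk_inj {k : ℕ} {V₁ V₂ : Type*} {ℓ₁ : Fin k → Option V₁}
    {ℓ₂ : Fin k → Option V₂} (hemp : ∀ x y, ¬ glueRel ℓ₁ ℓ₂ x y) :
    Function.Injective (glueMk ℓ₁ ℓ₂) := fun _ _ h =>
  eqvGen_eq_of_not hemp (glueMk_exact h)

lemma glueMk_surj {k : ℕ} {V₁ V₂ : Type*} {ℓ₁ : Fin k → Option V₁}
    {ℓ₂ : Fin k → Option V₂} : Function.Surjective (glueMk ℓ₁ ℓ₂) :=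
  Quotient.exists_rep

/-- With an empty right side, the left graph maps isomorphically onto the gluing. -/
noncomputable def glueIsoOfEmptyRight {k : ℕ} {V₁ V₂ : Type*} [IsEmpty V₂]
    (G₁ : SimpleGraph V₁) (ℓ₁ : Fin k → Option V₁)
    (G₂ : SimpleGraph V₂) (ℓ₂ : Fin k → Option V₂) :
    G₁ ≃g glueGraph G₁ ℓ₁ G₂ ℓ₂ := by
  have hemp : ∀ x y, ¬ glueRel ℓ₁ ℓ₂ x y := by
    rintro x y ⟨i, v₁, v₂, _⟩; exact isEmptyElim v₂
  have hinj := glueMk_inj hemp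
  refine ⟨Equiv.ofBijective (fun v => glueMk ℓ₁ ℓ₂ (Sum.inl v))
    ⟨fun a b h => by simpa using hinj h, ?_⟩, ?_⟩
  · intro c
    obtain ⟨u, rfl⟩ := glueMk_surj (ℓ₁ := ℓ₁) (ℓ₂ := ℓ₂) c
    cases u with
    | inl a => exact ⟨a, rfl⟩
    | inr b => exact isEmptyElim b
  · intro a b
    show (glueGraph G₁ ℓ₁ G₂ ℓ₂).Adj (glueMk ℓ₁ ℓ₂ (Sum.inl a)) (glueMk ℓ₁ ℓ₂ (Sum.inl b))
      ↔ G₁.Adj a b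
    constructor
    · rintro ⟨hne, u, v, hu, hv, hadj⟩
      have hu' := hinj hu
      have hv' := hinj hv
      subst hu' hv'
      exact hadj
    · intro h
      refine ⟨fun hc => ?_, Sum.inl a, Sum.inl b, rfl, rfl, h⟩
      have := hinj hc
      simp only [Sum.inl.injEq] at this
      exact G₁.loopless.irrefl a (this ▸ h)

/-- With an empty left side, the right graph maps isomorphically onto the gluing. -/
noncomputable def glueIsoOfEmptyLeft {k : ℕ} {V₁ V₂ : Type*} [IsEmpty V₁]
    (G₁ : SimpleGraph V₁) (ℓ₁ : Fin k → Option V₁)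
    (G₂ : SimpleGraph V₂) (ℓ₂ : Fin k → Option V₂) :
    G₂ ≃g glueGraph G₁ ℓ₁ G₂ ℓ₂ := by
  have hemp : ∀ x y, ¬ glueRel ℓ₁ ℓ₂ x y := by
    rintro x y ⟨i, v₁, v₂, _⟩; exact isEmptyElim v₁
  have hinj := glueMk_inj hemp
  refine ⟨Equiv.ofBijective (fun v => glueMk ℓ₁ ℓ₂ (Sum.inr v))
    ⟨fun a b h => by simpa using hinj h, ?_⟩, ?_⟩
  · intro c
    obtain ⟨u, rfl⟩ := glueMk_surj (ℓ₁ := ℓ₁) (ℓ₂ := ℓ₂) c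
    cases u with
    | inl a => exact isEmptyElim a
    | inr b => exact ⟨b, rfl⟩
  · intro a b
    show (glueGraph G₁ ℓ₁ G₂ ℓ₂).Adj (glueMk ℓ₁ ℓ₂ (Sum.inr a)) (glueMk ℓ₁ ℓ₂ (Sum.inr b))
      ↔ G₂.Adj a b
    constructor
    · rintro ⟨hne, u, v, hu, hv, hadj⟩
      have hu' := hinj hu
      have hv' := hinj hv
      subst hu' hv'
      exact hadj
    · intro h
      refine ⟨fun hc => ?_, Sum.inr a, Sum.inr b, rfl, rfl, h⟩
      have := hinj hc
      simp only [Sum.inr.injEq] at this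
      exact G₂.loopless.irrefl a (this ▸ h)

lemma isMConnected_of_iso {V W : Type*} [Fintype V] [Fintype W] {G : SimpleGraph V}
    {H : SimpleGraph W} (e : G ≃g H) {m : ℕ} (h : IsMConnected m G) : IsMConnected m H := by
  constructor
  · have h1 := h.1
    rwa [Fintype.card_congr e.toEquiv] at h1
  · intro S hS
    have hT : (⇑e ⁻¹' S).ncard < m := by
      have himg : ⇑e ⁻¹' S = ⇑e.toEquiv.symm '' S := by
        ext x
        constructor
        · intro hx; exact ⟨e x, hx, e.toEquiv.symm_apply_apply x⟩
        · rintro ⟨y, hy, rfl⟩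
          show e.toEquiv (e.toEquiv.symm y) ∈ S
          simpa using hy
      rw [himg, Set.ncard_image_of_injective _ e.toEquiv.symm.injective]
      exact hS
    have hc := h.2 _ hT
    have iso : (G.induce (⇑e ⁻¹' S)ᶜ) ≃g (H.induce Sᶜ) := by
      refine ⟨Equiv.subtypeEquiv e.toEquiv (fun a => by simp), ?_⟩
      intro a b
      exact e.map_adj_iff
    exact (iso.connected_iff).mp hc

lemma fA_iso {V W : Type*} [Fintype V] [Fintype W] {G : SimpleGraph V}
    {H : SimpleGraph W} (e : G ≃g H) (k₀ : ℕ) (A : Set ℕ) : fA k₀ A G = fA k₀ A H := by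
  have hcard : Fintype.card V = Fintype.card W := Fintype.card_congr e.toEquiv
  have hiff : IsMConnected (k₀ + 1) G ↔ IsMConnected (k₀ + 1) H :=
    ⟨fun h => isMConnected_of_iso e h, fun h => isMConnected_of_iso e.symm h⟩
  rw [fA, fA, hcard]
  by_cases h : IsMConnected (k₀ + 1) H ∧ Fintype.card W ∈ A
  · rw [if_pos ⟨hiff.mpr h.1, h.2⟩, if_pos h]
  · rw [if_neg (fun hc => h ⟨hiff.mp hc.1, hc.2⟩), if_neg h]

lemma fA_glue_eq_zero {k₀ k : ℕ} (hk : k ≤ k₀) (A : Set ℕ) {V₁ V₂ : Type*}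
    [Fintype V₁] [Fintype V₂] (G₁ : SimpleGraph V₁) (ℓ₁ : Fin k → Option V₁)
    (G₂ : SimpleGraph V₂) (ℓ₂ : Fin k → Option V₂)
    (v : V₁) (hv : ∀ i, ℓ₁ i ≠ some v) (w : V₂) (hw : ∀ i, ℓ₂ i ≠ some w) :
    fA k₀ A (glueGraph G₁ ℓ₁ G₂ ℓ₂) = 0 := by
  classical
  set Gg := glueGraph G₁ ℓ₁ G₂ ℓ₂ with hGg
  -- properties of the unlabeled vertices
  have hv1 : ∀ t, ¬ glueRel ℓ₁ ℓ₂ (Sum.inl v) t := by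
    rintro t ⟨i, v₁, v₂, h1, h2, he, _⟩
    rw [Sum.inl.injEq] at he
    exact hv i (he ▸ h1)
  have hv2 : ∀ t, ¬ glueRel ℓ₁ ℓ₂ t (Sum.inl v) := by
    rintro t ⟨i, v₁, v₂, h1, h2, _, he⟩; exact absurd he (by simp)
  have hw1 : ∀ t, ¬ glueRel ℓ₁ ℓ₂ (Sum.inr w) t := by
    rintro t ⟨i, v₁, v₂, h1, h2, he, _⟩; exact absurd he (by simp)
  have hw2 : ∀ t, ¬ glueRel ℓ₁ ℓ₂ t (Sum.inr w) := by
    rintro t ⟨i, v₁, v₂, h1, h2, _, he⟩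
    rw [Sum.inr.injEq] at he
    exact hw i (he ▸ h2)
  -- the cut set
  set S : Set (GlueVert ℓ₁ ℓ₂) := {c | ∃ i v₁ v₂, ℓ₁ i = some v₁ ∧ ℓ₂ i = some v₂ ∧
    c = glueMk ℓ₁ ℓ₂ (Sum.inl v₁)} with hSdef
  have hScard : S.ncard ≤ k := by
    set g : Fin k → GlueVert ℓ₁ ℓ₂ := fun i =>
      if h : ∃ v₁ v₂, ℓ₁ i = some v₁ ∧ ℓ₂ i = some v₂
      then glueMk ℓ₁ ℓ₂ (Sum.inl h.choose) else glueMk ℓ₁ ℓ₂ (Sum.inl v) with hg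
    have hsub : S ⊆ Set.range g := by
      rintro c ⟨i, v₁, v₂, h1, h2, rfl⟩
      refine ⟨i, ?_⟩
      have hex : ∃ v₁ v₂, ℓ₁ i = some v₁ ∧ ℓ₂ i = some v₂ := ⟨v₁, v₂, h1, h2⟩
      have hgi : g i = glueMk ℓ₁ ℓ₂ (Sum.inl hex.choose) := dif_pos hex
      obtain ⟨v₂', hc1, hc2⟩ := hex.choose_spec
      have hveq : hex.choose = v₁ := Option.some_inj.mp (hc1.symm.trans h1)
      rw [hgi]
      exact congrArg (fun t => glueMk ℓ₁ ℓ₂ (Sum.inl t)) hveq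
    calc S.ncard ≤ (Set.range g).ncard :=
          Set.ncard_le_ncard hsub (Set.finite_range g)
      _ ≤ k := by
          rw [← Set.image_univ, ← Finset.coe_univ, ← Finset.coe_image,
            Set.ncard_coe_finset]
          simpa using Finset.card_image_le (s := Finset.univ) (f := g)
  -- the two separated vertices
  set a : GlueVert ℓ₁ ℓ₂ := glueMk ℓ₁ ℓ₂ (Sum.inl v) with ha
  set b : GlueVert ℓ₁ ℓ₂ := glueMk ℓ₁ ℓ₂ (Sum.inr w) with hb
  have haS : a ∈ Sᶜ := by
    rintro ⟨i, v₁, v₂, h1, h2, he⟩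
    have := (glue_eqvGen_fix (glueMk_exact he.symm) (Sum.inl v) hv1 hv2).2 rfl
    rw [Sum.inl.injEq] at this
    exact hv i (this ▸ h1)
  have hbS : b ∈ Sᶜ := by
    rintro ⟨i, v₁, v₂, h1, h2, he⟩
    have := (glue_eqvGen_fix (glueMk_exact he) (Sum.inr w) hw1 hw2).1 rfl
    exact absurd this (by simp)
  -- left-representability is preserved along edges in the induced graph
  set L : ↥Sᶜ → Prop := fun c => ∃ u, glueMk ℓ₁ ℓ₂ (Sum.inl u) = ↑c with hL
  have hmix : ∀ (c : ↥Sᶜ) (p : V₁) (q : V₂), glueMk ℓ₁ ℓ₂ (Sum.inl p) = ↑c →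
      glueMk ℓ₁ ℓ₂ (Sum.inr q) = ↑c → False := by
    rintro c p q hp hq
    have heq : glueMk ℓ₁ ℓ₂ (Sum.inl p) = glueMk ℓ₁ ℓ₂ (Sum.inr q) := by rw [hp, hq]
    rcases glue_eqvGen_sides (glueMk_exact heq) with ⟨_, ⟨b', hb'⟩⟩ | ⟨⟨a', ha'⟩, _⟩ |
      ⟨i, v₁, v₂, h1, h2, h3⟩
    · simp at hb'
    · simp at ha'
    · exact c.2 ⟨i, v₁, v₂, h1, h2, hp.symm.trans
        (Quotient.sound h3 : glueMk ℓ₁ ℓ₂ (Sum.inl p) = glueMk ℓ₁ ℓ₂ (Sum.inl v₁))⟩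
  have adjL : ∀ c d : ↥Sᶜ, (Gg.induce Sᶜ).Adj c d → (L c ↔ L d) := by
    rintro c d ⟨hne, u, u', hu, hu', hadj⟩
    cases u with
    | inl p =>
      cases u' with
      | inl p' => simp only [hL]; exact iff_of_true ⟨p, hu⟩ ⟨p', hu'⟩
      | inr q => exact absurd hadj (by simp [sumAdj])
    | inr q =>
      cases u' with
      | inl p => exact absurd hadj (by simp [sumAdj])
      | inr q' =>
        simp only [hL]
        exact iff_of_false (fun ⟨p, hp⟩ => hmix c p q hp hu)
          (fun ⟨p, hp⟩ => hmix d p q' hp hu')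
  have hnot : ¬ (Gg.induce Sᶜ).Connected := by
    intro hc
    obtain ⟨p⟩ := hc.preconnected ⟨a, haS⟩ ⟨b, hbS⟩
    have key : ∀ {x y : ↥Sᶜ} (q : (Gg.induce Sᶜ).Walk x y), L x ↔ L y := by
      intro x y q
      induction q with
      | nil => exact Iff.rfl
      | cons hadj _ ih => exact (adjL _ _ hadj).trans ih
    have hLa : L ⟨a, haS⟩ := ⟨v, rfl⟩
    have hLb : ¬ L ⟨b, hbS⟩ := fun ⟨p', hp'⟩ => hmix ⟨b, hbS⟩ p' w hp' rfl
    exact hLb ((key p).mp hLa)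
  rw [fA, if_neg]
  rintro ⟨hmc, _⟩
  exact hnot (hmc.2 S (lt_of_le_of_lt hScard (by omega)))

/-- The restricted connection matrix of `f_A` has rank at most `2`: there are
two functions `g₁, g₂` such that every row lies in their `ℝ`-linear span. -/
theorem fA_connection_matrix_rank_le_two (k₀ k : ℕ) (hk : k ≤ k₀) (A : Set ℕ) :
    ∃ g₁ g₂ : Idx k → ℝ, ∀ X : Idx k,
      (fun Y : Idx k => fA k₀ A (glueGraph X.1.2.1 X.1.2.2 Y.1.2.1 Y.1.2.2)) ∈
        Submodule.span ℝ ({g₁, g₂} : Set (Idx k → ℝ)) := by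
  classical
  refine ⟨fun Y => fA k₀ A Y.1.2.1, fun Y => if Y.1.1 = 0 then 1 else 0, fun X => ?_⟩
  by_cases hX : X.1.1 = 0
  · have hrow : (fun Y : Idx k => fA k₀ A (glueGraph X.1.2.1 X.1.2.2 Y.1.2.1 Y.1.2.2)) =
        fun Y => fA k₀ A Y.1.2.1 := by
      funext Y
      haveI : IsEmpty (Fin X.1.1) := ⟨fun x => absurd x.2 (by omega)⟩
      exact (fA_iso (glueIsoOfEmptyLeft X.1.2.1 X.1.2.2 Y.1.2.1 Y.1.2.2) k₀ A).symm
    rw [hrow]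
    exact Submodule.subset_span (Set.mem_insert _ _)
  · obtain ⟨v, hv⟩ := X.2.resolve_left hX
    have hrow : (fun Y : Idx k => fA k₀ A (glueGraph X.1.2.1 X.1.2.2 Y.1.2.1 Y.1.2.2)) =
        (fA k₀ A X.1.2.1) • (fun Y : Idx k => if Y.1.1 = 0 then (1:ℝ) else 0) := by
      funext Y
      by_cases hY : Y.1.1 = 0
      · haveI : IsEmpty (Fin Y.1.1) := ⟨fun x => absurd x.2 (by omega)⟩
        simp only [Pi.smul_apply, smul_eq_mul, if_pos hY, mul_one]
        exact (fA_iso (glueIsoOfEmptyRight X.1.2.1 X.1.2.2 Y.1.2.1 Y.1.2.2) k₀ A).symm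
      · obtain ⟨w, hw⟩ := Y.2.resolve_left hY
        simp only [Pi.smul_apply, smul_eq_mul, if_neg hY, mul_zero]
        exact fA_glue_eq_zero hk A X.1.2.1 X.1.2.2 Y.1.2.1 Y.1.2.2 v hv w hw
    rw [hrow]
    exact Submodule.smul_mem _ _
      (Submodule.subset_span (Set.mem_insert_of_mem _ (Set.mem_singleton _)))
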